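/- arXiv:2412.11117 — 6 statements merged into one kernel-verified Lean document; each statement's English description precedes it below -/
import Mathlib

section
/- For all real numbers β₁ and β₂ with 0 < β₁, β₁ ≠ 1 and β₂ > 1, there exists a constant C > 0 such that for all t ≥ 0 one has ∫₀ᵗ (1 + t − s)^{−β₁} (1 + s)^{−β₂} ds ≤ C (1 + t)^{−min(β₁, β₂)}. -/
open MeasureTheory

lemma aux_integral (β : ℝ) (hβ : β ≠ 1) (T : ℝ) (hT : 0 ≤ T) :
    ∫ s in (0:ℝ)..T, (1 + s) ^ (-β) = ((1 + T) ^ (1 - β) - 1) / (1 - β) := by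
  have h1 : (∫ s in (0:ℝ)..T, (1 + s) ^ (-β)) = ∫ x in (1:ℝ)..(1+T), x ^ (-β) := by
    have := intervalIntegral.integral_comp_add_left (a := (0:ℝ)) (b := T)
      (fun x => x ^ (-β)) 1
    simpa using this
  rw [h1, integral_rpow]
  · rw [Real.one_rpow]
    ring_nf
  · right
    constructor
    · intro h
      apply hβ
      linarith [neg_injective h]
    · rw [Set.uIcc_of_le (by linarith)]
      intro h
      have := h.1
      linarith

lemma aux_bound (β : ℝ) (hβ0 : 0 < β) (hβ : β ≠ 1) (T : ℝ) (hT : 0 ≤ T) :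
    ∫ s in (0:ℝ)..T, (1 + s) ^ (-β) ≤ (1 / |1 - β|) * (1 + T) ^ (max 0 (1 - β)) := by
  rw [aux_integral β hβ T hT]
  have h1T : (0:ℝ) < 1 + T := by linarith
  rcases lt_or_gt_of_ne hβ with h | h
  · -- β < 1
    have habs : |1 - β| = 1 - β := abs_of_pos (by linarith)
    have hmax : max 0 (1 - β) = 1 - β := max_eq_right (by linarith)
    rw [habs, hmax, div_le_iff₀ (by linarith)]
    have hpow : (0:ℝ) ≤ (1 + T) ^ (1 - β) := Real.rpow_nonneg (by linarith) _
    rw [one_div, inv_mul_eq_div, div_mul_cancel₀ _ (by linarith : (1:ℝ) - β ≠ 0)]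
    linarith
  · -- β > 1
    have habs : |1 - β| = β - 1 := by rw [abs_of_neg (by linarith)]; ring
    have hmax : max 0 (1 - β) = 0 := max_eq_left (by linarith)
    rw [habs, hmax, Real.rpow_zero, mul_one]
    have hpow : (0:ℝ) ≤ (1 + T) ^ (1 - β) := Real.rpow_nonneg (by linarith) _
    have heq : ((1 + T) ^ (1 - β) - 1) / (1 - β) = (1 - (1 + T) ^ (1 - β)) / (β - 1) := by
      rw [div_eq_div_iff (by linarith) (by linarith)]; ring
    rw [heq, div_le_div_iff₀ (by linarith) (by linarith)]
    nlinarith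

/-- For all real `β₁ ≠ 1`, `0 < β₁`, and `β₂ > 1`, there is `C > 0` such that for all `t ≥ 0`,
`∫₀ᵗ (1 + t − s)^{−β₁} (1 + s)^{−β₂} ds ≤ C (1 + t)^{−min(β₁, β₂)}`. -/
theorem decay_convolution_integral (β₁ β₂ : ℝ) (hβ₁ : 0 < β₁) (hβ₁' : β₁ ≠ 1) (hβ₂ : 1 < β₂) :
    ∃ C : ℝ, 0 < C ∧ ∀ t : ℝ, 0 ≤ t →
      (∫ s in Set.Icc (0 : ℝ) t, (1 + t - s) ^ (-β₁) * (1 + s) ^ (-β₂)) ≤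
        C * (1 + t) ^ (-min β₁ β₂) := by
  set K₁ : ℝ := 1 / |1 - β₁| with hK₁def
  set K₂ : ℝ := 1 / |1 - β₂| with hK₂def
  have hK₁ : 0 < K₁ := by
    apply div_pos one_pos
    rw [abs_pos]
    intro h; apply hβ₁'; linarith
  have hK₂ : 0 < K₂ := by
    apply div_pos one_pos
    rw [abs_pos]
    intro h; linarith
  refine ⟨2 ^ β₁ * K₂ + 2 ^ β₂ * K₁, by positivity, fun t ht => ?_⟩
  have h1t : (0:ℝ) < 1 + t := by linarith
  set F : ℝ → ℝ := fun s => (1 + t - s) ^ (-β₁) * (1 + s) ^ (-β₂) with hFdef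
  -- continuity
  have hc : ContinuousOn F (Set.Icc 0 t) := by
    apply ContinuousOn.mul
    · apply ContinuousOn.rpow_const
      · exact (continuous_const.sub continuous_id).continuousOn
      · intro s hs
        left
        have h2 := hs.2
        first
        | (intro h; linarith)
        | (simp only [id_eq]; intro h; linarith)
    · apply ContinuousOn.rpow_const
      · exact (continuous_const.add continuous_id).continuousOn
      · intro s hs
        left
        have h2 := hs.1
        first
        | (intro h; linarith)
        | (simp only [id_eq]; intro h; linarith)
  have hint1 : IntervalIntegrable F volume 0 (t/2) :=
    (hc.mono (Set.Icc_subset_Icc le_rfl (by linarith))).intervalIntegrable_of_Icc (by linarith)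
  have hint2 : IntervalIntegrable F volume (t/2) t :=
    (hc.mono (Set.Icc_subset_Icc (by linarith) le_rfl)).intervalIntegrable_of_Icc (by linarith)
  -- rewrite as interval integral and split
  have hIcc : (∫ s in Set.Icc (0:ℝ) t, F s) = (∫ s in (0:ℝ)..(t/2), F s) + ∫ s in (t/2)..t, F s := by
    rw [intervalIntegral.integral_add_adjacent_intervals hint1 hint2,
      intervalIntegral.integral_of_le ht, ← integral_Icc_eq_integral_Ioc]
  rw [show (∫ s in Set.Icc (0:ℝ) t, (1 + t - s) ^ (-β₁) * (1 + s) ^ (-β₂))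
      = ∫ s in Set.Icc (0:ℝ) t, F s from rfl, hIcc]
  -- pointwise bound helpers
  have hhalf : ((1+t)/2 : ℝ) ^ (-β₁) = 2 ^ β₁ * (1+t) ^ (-β₁) := by
    rw [Real.div_rpow (by linarith) (by norm_num), Real.rpow_neg (by norm_num : (0:ℝ) ≤ 2),
      div_eq_mul_inv, inv_inv, mul_comm]
  have hhalf₂ : ((1+t)/2 : ℝ) ^ (-β₂) = 2 ^ β₂ * (1+t) ^ (-β₂) := by
    rw [Real.div_rpow (by linarith) (by norm_num), Real.rpow_neg (by norm_num : (0:ℝ) ≤ 2),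
      div_eq_mul_inv, inv_inv, mul_comm]
  -- bound piece 1
  have hb1 : (∫ s in (0:ℝ)..(t/2), F s) ≤ 2 ^ β₁ * (1+t) ^ (-β₁) * (K₂ * (1 + t/2) ^ (max 0 (1-β₂))) := by
    have hmono : (∫ s in (0:ℝ)..(t/2), F s) ≤
        ∫ s in (0:ℝ)..(t/2), (2 ^ β₁ * (1+t) ^ (-β₁)) * (1 + s) ^ (-β₂) := by
      apply intervalIntegral.integral_mono_on (by linarith) hint1
      · apply ContinuousOn.intervalIntegrable_of_Icc (by linarith)
        apply ContinuousOn.mul continuousOn_const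
        apply ContinuousOn.rpow_const (continuous_const.add continuous_id).continuousOn
        intro s hs; left; have h2 := hs.1
        first
        | (intro h; linarith)
        | (simp only [Pi.add_apply, id_eq]; intro h; linarith)
      · intro s hs
        have hs1 := hs.1
        have hs2 := hs.2
        have hb : (1 + t - s) ^ (-β₁) ≤ 2 ^ β₁ * (1+t) ^ (-β₁) := by
          rw [← hhalf]
          exact Real.rpow_le_rpow_of_nonpos (by linarith) (by linarith) (by linarith)
        exact mul_le_mul_of_nonneg_right hb (Real.rpow_nonneg (by linarith) _)
    refine hmono.trans ?_
    rw [intervalIntegral.integral_const_mul]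
    apply mul_le_mul_of_nonneg_left _ (by positivity)
    exact aux_bound β₂ (by linarith) (by intro h; linarith) (t/2) (by linarith)
  -- bound piece 2
  have hb2 : (∫ s in (t/2)..t, F s) ≤ 2 ^ β₂ * (1+t) ^ (-β₂) * (K₁ * (1 + t/2) ^ (max 0 (1-β₁))) := by
    have hmono : (∫ s in (t/2)..t, F s) ≤
        ∫ s in (t/2)..t, (1 + t - s) ^ (-β₁) * (2 ^ β₂ * (1+t) ^ (-β₂)) := by
      apply intervalIntegral.integral_mono_on (by linarith) hint2
      · apply ContinuousOn.intervalIntegrable_of_Icc (by linarith)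
        apply ContinuousOn.mul _ continuousOn_const
        apply ContinuousOn.rpow_const (continuous_const.sub continuous_id).continuousOn
        intro s hs; left; have h2 := hs.2
        first
        | (intro h; linarith)
        | (simp only [Pi.sub_apply, id_eq]; intro h; linarith)
      · intro s hs
        have hs1 := hs.1
        have hs2 := hs.2
        have hb : (1 + s) ^ (-β₂) ≤ 2 ^ β₂ * (1+t) ^ (-β₂) := by
          rw [← hhalf₂]
          exact Real.rpow_le_rpow_of_nonpos (by linarith) (by linarith) (by linarith)
        exact mul_le_mul_of_nonneg_left hb (Real.rpow_nonneg (by linarith) _)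
    refine hmono.trans ?_
    rw [intervalIntegral.integral_mul_const]
    rw [show (∫ s in (t/2)..t, (1 + t - s) ^ (-β₁)) = ∫ u in (0:ℝ)..(t/2), (1 + u) ^ (-β₁) from ?_]
    · rw [mul_comm]
      apply mul_le_mul_of_nonneg_left _ (by positivity)
      exact aux_bound β₁ hβ₁ hβ₁' (t/2) (by linarith)
    · have h1 : ∀ s : ℝ, (1 + t - s : ℝ) = 1 + (t - s) := fun s => by ring
      simp only [h1]
      have := intervalIntegral.integral_comp_sub_left (a := t/2) (b := t)
        (fun u => (1 + u) ^ (-β₁)) t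
      simpa [show t - t/2 = t/2 from by ring] using this
  -- combine
  have hexp1 : (1+t) ^ (-β₁) * (1 + t/2) ^ (max 0 (1-β₂)) ≤ (1+t) ^ (-min β₁ β₂) := by
    have hmax : max 0 (1-β₂) = 0 := max_eq_left (by linarith)
    rw [hmax, Real.rpow_zero, mul_one]
    exact Real.rpow_le_rpow_of_exponent_le (by linarith)
      (by simp [neg_le_neg_iff])
  have hexp2 : (1+t) ^ (-β₂) * (1 + t/2) ^ (max 0 (1-β₁)) ≤ (1+t) ^ (-min β₁ β₂) := by
    rcases le_or_gt β₁ 1 with h | h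
    · have hmax : max 0 (1-β₁) = 1 - β₁ := max_eq_right (by linarith)
      have hmin : min β₁ β₂ = β₁ := min_eq_left (by linarith)
      rw [hmax, hmin]
      have h1 : (1 + t/2 : ℝ) ^ (1-β₁) ≤ (1+t) ^ (1-β₁) :=
        Real.rpow_le_rpow (by linarith) (by linarith) (by linarith)
      calc (1+t) ^ (-β₂) * (1 + t/2) ^ (1-β₁)
          ≤ (1+t) ^ (-β₂) * (1+t) ^ (1-β₁) :=
            mul_le_mul_of_nonneg_left h1 (Real.rpow_nonneg (by linarith) _)
        _ = (1+t) ^ (-β₂ + (1-β₁)) := (Real.rpow_add h1t _ _).symm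
        _ ≤ (1+t) ^ (-β₁) :=
            Real.rpow_le_rpow_of_exponent_le (by linarith) (by linarith)
    · have hmax : max 0 (1-β₁) = 0 := max_eq_left (by linarith)
      rw [hmax, Real.rpow_zero, mul_one]
      exact Real.rpow_le_rpow_of_exponent_le (by linarith)
        (by simp [neg_le_neg_iff])
  calc (∫ s in (0:ℝ)..(t/2), F s) + ∫ s in (t/2)..t, F s
      ≤ 2 ^ β₁ * (1+t) ^ (-β₁) * (K₂ * (1 + t/2) ^ (max 0 (1-β₂)))
        + 2 ^ β₂ * (1+t) ^ (-β₂) * (K₁ * (1 + t/2) ^ (max 0 (1-β₁))) := add_le_add hb1 hb2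
    _ = 2 ^ β₁ * K₂ * ((1+t) ^ (-β₁) * (1 + t/2) ^ (max 0 (1-β₂)))
        + 2 ^ β₂ * K₁ * ((1+t) ^ (-β₂) * (1 + t/2) ^ (max 0 (1-β₁))) := by ring
    _ ≤ 2 ^ β₁ * K₂ * (1+t) ^ (-min β₁ β₂) + 2 ^ β₂ * K₁ * (1+t) ^ (-min β₁ β₂) :=
        add_le_add (mul_le_mul_of_nonneg_left hexp1 (by positivity))
          (mul_le_mul_of_nonneg_left hexp2 (by positivity))
    _ = (2 ^ β₁ * K₂ + 2 ^ β₂ * K₁) * (1+t) ^ (-min β₁ β₂) := by ring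
end

section
/- For every s ∈ ℝ, with a₀ = 1, a₁ = 5s² + 5, a₂ = 7s⁴ + 22s², a₃ = 3s⁶ + 18s⁴ + 10s², a₄ = s⁶ + 5s⁴, the third Routh–Hurwitz determinant A₃ := det [[a₁, a₀, 0], [a₃, a₂, a₁], [0, a₄, a₃]] equals 96s¹² + 932s¹⁰ + 2731s⁸ + 2795s⁶ + 875s⁴; in particular A₃ > 0 whenever s ≠ 0. -/
/-- With `a₀ = 1`, `a₁ = 5s²+5`, `a₂ = 7s⁴+22s²`, `a₃ = 3s⁶+18s⁴+10s²`, `a₄ = s⁶+5s⁴`, the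
third Routh–Hurwitz determinant `A₃ = det [[a₁, a₀, 0], [a₃, a₂, a₁], [0, a₄, a₃]]` equals
`96s¹² + 932s¹⁰ + 2731s⁸ + 2795s⁶ + 875s⁴`, and is positive whenever `s ≠ 0`. -/
theorem routh_hurwitz_A3 (s : ℝ) :
    Matrix.det !![5 * s ^ 2 + 5, 1, 0;
                  3 * s ^ 6 + 18 * s ^ 4 + 10 * s ^ 2, 7 * s ^ 4 + 22 * s ^ 2, 5 * s ^ 2 + 5;
                  0, s ^ 6 + 5 * s ^ 4, 3 * s ^ 6 + 18 * s ^ 4 + 10 * s ^ 2] =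
        96 * s ^ 12 + 932 * s ^ 10 + 2731 * s ^ 8 + 2795 * s ^ 6 + 875 * s ^ 4 ∧
      (s ≠ 0 →
        0 < Matrix.det !![5 * s ^ 2 + 5, 1, 0;
                  3 * s ^ 6 + 18 * s ^ 4 + 10 * s ^ 2, 7 * s ^ 4 + 22 * s ^ 2, 5 * s ^ 2 + 5;
                  0, s ^ 6 + 5 * s ^ 4, 3 * s ^ 6 + 18 * s ^ 4 + 10 * s ^ 2]) := by
  have h : Matrix.det !![5 * s ^ 2 + 5, 1, 0;
      3 * s ^ 6 + 18 * s ^ 4 + 10 * s ^ 2, 7 * s ^ 4 + 22 * s ^ 2, 5 * s ^ 2 + 5;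
      0, s ^ 6 + 5 * s ^ 4, 3 * s ^ 6 + 18 * s ^ 4 + 10 * s ^ 2] =
      96 * s ^ 12 + 932 * s ^ 10 + 2731 * s ^ 8 + 2795 * s ^ 6 + 875 * s ^ 4 := by
    simp [Matrix.det_fin_three]; ring
  refine ⟨h, fun hs => ?_⟩
  rw [h]
  have h4 : 0 < s ^ 4 := by positivity
  nlinarith [sq_nonneg s, sq_nonneg (s^2), sq_nonneg (s^3), sq_nonneg (s^4), sq_nonneg (s^5), sq_nonneg (s^6), pow_pos (abs_pos.mpr hs) 4]
end

section
/- For every s ∈ ℝ with s ≠ 0, every complex eigenvalue λ of the matrix J(s) (viewed as a complex 4×4 matrix, i.e. every root λ ∈ ℂ of its characteristic polynomial) satisfies Re λ > 0. -/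
set_option maxHeartbeats 1000000


/-- The Fourier symbol of the linearized diffusion-approximation radiation
hydrodynamics system at frequency of modulus `s`. -/
noncomputable def J (s : ℝ) : Matrix (Fin 4) (Fin 4) ℝ :=
  !![0, s, 0, 0;
     -s, 3 * s ^ 2, -s, -s;
     0, s, s ^ 2 + 4, -1;
     0, 0, -4, s ^ 2 + 1]

/-- For `s ≠ 0`, every complex eigenvalue of `J(s)` (i.e. every complex root of its
characteristic polynomial) has positive real part. -/
theorem eigenvalues_J_pos_re (s : ℝ) (hs : s ≠ 0) (l : ℂ)
    (hl : ((J s).map (algebraMap ℝ ℂ)).charpoly.IsRoot l) :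
    0 < l.re := by
  -- Step 1: the explicit characteristic equation
  have hP : l^4 - (5+5*(s:ℂ)^2)*l^3 + (22*(s:ℂ)^2+7*(s:ℂ)^4)*l^2
      - (10*(s:ℂ)^2+18*(s:ℂ)^4+3*(s:ℂ)^6)*l + (5*(s:ℂ)^4+(s:ℂ)^6) = 0 := by
    have h0 : Polynomial.eval l ((J s).map (algebraMap ℝ ℂ)).charpoly = 0 := hl
    rw [Matrix.charpoly, ← Polynomial.coe_evalRingHom, RingHom.map_det] at h0
    rw [show (Polynomial.evalRingHom l).mapMatrix (((J s).map (algebraMap ℝ ℂ)).charmatrix)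
        = !![l, -s, 0, 0;
             s, l - 3*s^2, s, s;
             0, -s, l - (s^2+4), 1;
             0, 0, 4, l - (s^2+1)] from by
      ext i j
      fin_cases i <;> fin_cases j <;>
        simp (config := { decide := true }) [Matrix.charmatrix_apply, J,
          Matrix.diagonal_apply, Matrix.one_apply, Fin.ext_iff,
          Matrix.vecHead, Matrix.vecTail]] at h0
    rw [Matrix.det_succ_row_zero] at h0
    simp [Fin.sum_univ_succ, Fin.succAbove, Matrix.det_fin_three] at h0
    linear_combination h0
  -- Step 2: real and imaginary parts
  set x := l.re with hxdef
  set y := l.im with hydef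
  have hl2 : l = (x : ℂ) + (y : ℂ) * Complex.I := (Complex.re_add_im l).symm
  rw [hl2] at hP
  have hre : x^4 - 6*x^2*y^2 + y^4 - (5+5*s^2)*(x^3-3*x*y^2)
      + (22*s^2+7*s^4)*(x^2-y^2) - (10*s^2+18*s^4+3*s^6)*x + (5*s^4+s^6) = 0 := by
    have h := congrArg Complex.re hP
    simp only [pow_succ, pow_zero, one_mul, Complex.add_re, Complex.sub_re, Complex.mul_re,
      Complex.mul_im, Complex.add_im, Complex.sub_im, Complex.I_re, Complex.I_im,
      Complex.ofReal_re, Complex.ofReal_im, Complex.zero_re, Complex.zero_im,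
      Complex.re_ofNat, Complex.im_ofNat, Complex.one_re, Complex.one_im, mul_zero, zero_mul, mul_one, sub_zero, zero_sub,
      add_zero, zero_add] at h
    linear_combination h
  have him : y * (4*x^3 - 4*x*y^2 - 3*(5+5*s^2)*x^2 + (5+5*s^2)*y^2
      + 2*(22*s^2+7*s^4)*x - (10*s^2+18*s^4+3*s^6)) = 0 := by
    have h := congrArg Complex.im hP
    simp only [pow_succ, pow_zero, one_mul, Complex.add_re, Complex.sub_re, Complex.mul_re,
      Complex.mul_im, Complex.add_im, Complex.sub_im, Complex.I_re, Complex.I_im,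
      Complex.ofReal_re, Complex.ofReal_im, Complex.zero_re, Complex.zero_im,
      Complex.re_ofNat, Complex.im_ofNat, Complex.one_re, Complex.one_im, mul_zero, zero_mul, mul_one, sub_zero, zero_sub,
      add_zero, zero_add] at h
    linear_combination h
  -- Step 3: suppose x ≤ 0 and derive a contradiction
  by_contra hxpos
  have hx : x ≤ 0 := not_lt.mp hxpos
  have hu : (0:ℝ) ≤ -x := by linarith
  have hs2 : (0:ℝ) < s^2 := by positivity
  rcases mul_eq_zero.mp him with hy | hstuff
  · -- real eigenvalue
    rw [hy] at hre
    nlinarith [hre, hs2, mul_nonneg (pow_nonneg hu 3) hs2.le, pow_nonneg hu 3,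
      mul_nonneg (mul_nonneg hu hu) hs2.le, mul_nonneg (mul_nonneg (mul_nonneg hu hu) hs2.le) hs2.le,
      mul_nonneg hu (mul_nonneg hs2.le hs2.le), mul_nonneg (mul_nonneg hu hs2.le) (mul_nonneg hs2.le hs2.le),
      pow_nonneg hu 4, mul_pos hs2 hs2, mul_pos (mul_pos hs2 hs2) hs2,
      mul_nonneg (pow_nonneg hu 2) hs2.le]
  · -- genuinely complex eigenvalue
    have hN : (10*s^2+18*s^4+3*s^6) - 2*(22*s^2+7*s^4)*x + 3*(5+5*s^2)*x^2 - 4*x^3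
        - y^2*((5+5*s^2) - 4*x) = 0 := by linear_combination -hstuff
    have hRzero :
        ((10*s^2+18*s^4+3*s^6) - 2*(22*s^2+7*s^4)*x + 3*(5+5*s^2)*x^2 - 4*x^3)^2
        + ((10*s^2+18*s^4+3*s^6) - 2*(22*s^2+7*s^4)*x + 3*(5+5*s^2)*x^2 - 4*x^3)
          * (3*(5+5*s^2)*x - 6*x^2 - (22*s^2+7*s^4)) * ((5+5*s^2) - 4*x)
        + (x^4 - (5+5*s^2)*x^3 + (22*s^2+7*s^4)*x^2 - (10*s^2+18*s^4+3*s^6)*x + (5*s^4+s^6))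
          * ((5+5*s^2) - 4*x)^2 = 0 := by
      linear_combination (((5+5*s^2) - 4*x)^2) * hre
        + (((10*s^2+18*s^4+3*s^6) - 2*(22*s^2+7*s^4)*x + 3*(5+5*s^2)*x^2 - 4*x^3)
           + y^2*((5+5*s^2) - 4*x)
           + (3*(5+5*s^2)*x - 6*x^2 - (22*s^2+7*s^4)) * ((5+5*s^2) - 4*x)) * hN
    linarith [hRzero, mul_pos hs2 hs2,
    mul_nonneg (pow_nonneg hu 0) (pow_nonneg hs2.le 2),
    mul_nonneg (pow_nonneg hu 0) (pow_nonneg hs2.le 3),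
    mul_nonneg (pow_nonneg hu 0) (pow_nonneg hs2.le 4),
    mul_nonneg (pow_nonneg hu 0) (pow_nonneg hs2.le 5),
    mul_nonneg (pow_nonneg hu 0) (pow_nonneg hs2.le 6),
    mul_nonneg (pow_nonneg hu 1) (pow_nonneg hs2.le 1),
    mul_nonneg (pow_nonneg hu 1) (pow_nonneg hs2.le 2),
    mul_nonneg (pow_nonneg hu 1) (pow_nonneg hs2.le 3),
    mul_nonneg (pow_nonneg hu 1) (pow_nonneg hs2.le 4),
    mul_nonneg (pow_nonneg hu 1) (pow_nonneg hs2.le 5),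
    mul_nonneg (pow_nonneg hu 2) (pow_nonneg hs2.le 1),
    mul_nonneg (pow_nonneg hu 2) (pow_nonneg hs2.le 2),
    mul_nonneg (pow_nonneg hu 2) (pow_nonneg hs2.le 3),
    mul_nonneg (pow_nonneg hu 2) (pow_nonneg hs2.le 4),
    mul_nonneg (pow_nonneg hu 3) (pow_nonneg hs2.le 0),
    mul_nonneg (pow_nonneg hu 3) (pow_nonneg hs2.le 1),
    mul_nonneg (pow_nonneg hu 3) (pow_nonneg hs2.le 2),
    mul_nonneg (pow_nonneg hu 3) (pow_nonneg hs2.le 3),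
    mul_nonneg (pow_nonneg hu 4) (pow_nonneg hs2.le 0),
    mul_nonneg (pow_nonneg hu 4) (pow_nonneg hs2.le 1),
    mul_nonneg (pow_nonneg hu 4) (pow_nonneg hs2.le 2),
    mul_nonneg (pow_nonneg hu 5) (pow_nonneg hs2.le 0),
    mul_nonneg (pow_nonneg hu 5) (pow_nonneg hs2.le 1),
    mul_nonneg (pow_nonneg hu 6) (pow_nonneg hs2.le 0)]
end

section
/- For all real numbers r, R with 0 < r < R, there exist constants C > 0 and κ > 0 such that for every s ∈ [r, R] and every t ≥ 0 the matrix exponential satisfies ‖exp(−t · J(s))‖ ≤ C e^{−κ t}, where ‖·‖ is the operator norm on 4×4 real matrices. -/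
set_option maxHeartbeats 1000000
open scoped Matrix.Norms.L2Operator
open scoped Matrix

private lemma mulVec_negJ (s : ℝ) (w : Fin 4 → ℝ) :
    ((-(J s)) *ᵥ w) 0 = -s * w 1 ∧
    ((-(J s)) *ᵥ w) 1 = s * w 0 - 3*s^2 * w 1 + s * w 2 + s * w 3 ∧
    ((-(J s)) *ᵥ w) 2 = -s * w 1 - (s^2+4) * w 2 + w 3 ∧
    ((-(J s)) *ᵥ w) 3 = 4 * w 2 - (s^2+1) * w 3 := by
  refine ⟨?_, ?_, ?_, ?_⟩ <;>
    simp [J, Matrix.mulVec, dotProduct, Fin.sum_univ_four, Matrix.cons_val_zero,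
      Matrix.cons_val_one, Matrix.head_cons, Matrix.cons_val_two, Matrix.tail_cons,
      Matrix.cons_val_three, Matrix.head_fin_const, Matrix.cons_val_fin_one] <;> ring

private lemma comp_deriv (s : ℝ) (y : Fin 4 → ℝ) (i : Fin 4) (τ : ℝ) :
    HasDerivAt (fun u : ℝ => ((NormedSpace.exp (u • (-(J s)))) *ᵥ y) i)
      (((-(J s)) *ᵥ ((NormedSpace.exp (τ • (-(J s)))) *ᵥ y)) i) τ := by
  set A := -(J s) with hA
  have hf : HasDerivAt (fun u : ℝ => NormedSpace.exp (u • A))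
      (A * NormedSpace.exp (τ • A)) τ := hasDerivAt_exp_smul_const' A τ
  let L : Matrix (Fin 4) (Fin 4) ℝ →ₗ[ℝ] ℝ :=
    { toFun := fun M => (M *ᵥ y) i
      map_add' := by intro M N; simp [Matrix.add_mulVec]
      map_smul' := by intro c M; simp [Matrix.smul_mulVec] }
  have h := (LinearMap.toContinuousLinearMap L).hasFDerivAt.comp_hasDerivAt τ hf
  have h2 : (LinearMap.toContinuousLinearMap L) (A * NormedSpace.exp (τ • A))
      = (A *ᵥ ((NormedSpace.exp (τ • A)) *ᵥ y)) i := by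
    show ((A * NormedSpace.exp (τ • A)) *ᵥ y) i = _
    rw [← Matrix.mulVec_mulVec]
  rw [h2] at h
  exact h

private lemma core_ineq (s b r x1 x2 x3 x4 : ℝ) (hr0 : 0 < r) (hrs : r ≤ s)
    (hb0 : 0 < b) (hbs : b * s ≤ 1) (hbs2 : 9 * b * s ^ 2 ≤ 1) (hb9 : b ≤ 1 / 9) :
    (2*x1*(-s*x2) + 2*x2*(s*x1 - 3*s^2*x2 + s*x3 + s*x4)
      + 2*(x3+x4)*((-s*x2 - (s^2+4)*x3 + x4) + (4*x3 - (s^2+1)*x4))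
      + (4*x3-x4)*(4*(-s*x2 - (s^2+4)*x3 + x4) - (4*x3 - (s^2+1)*x4))/2
      - b*s*((-s*x2)*x2 + x1*(s*x1 - 3*s^2*x2 + s*x3 + s*x4)))
    + (b*r^2/3) * (x1^2+x2^2+5*x3^2+5/4*x4^2 - b*s*x1*x2) ≤ 0 := by
  have hs0 : 0 < s := lt_of_lt_of_le hr0 hrs
  have hr2s2 : r^2 ≤ s^2 := by nlinarith
  have h1bs : 0 ≤ 1 - b*s := by linarith
  have hsr : 0 ≤ s^2 - r^2 := by linarith
  have hc1 : 0 ≤ b*s^2*(3/4) - b*r^2/3 - b^2*s*r^2/6 := by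
    nlinarith [mul_nonneg hb0.le hsr, mul_nonneg (mul_nonneg hb0.le (sq_nonneg r)) h1bs]
  have hc2 : 0 ≤ (6-b)*s^2 - 18*b*s^4 - 2*s^2 - b*r^2/3 - b^2*s*r^2/6 := by
    nlinarith [mul_nonneg (sq_nonneg s) (by linarith : (0:ℝ) ≤ 1 - 9*b*s^2),
      mul_nonneg hb0.le hsr, mul_nonneg (mul_nonneg hb0.le (sq_nonneg r)) h1bs,
      mul_nonneg (sq_nonneg s) hb0.le, mul_nonneg (mul_nonneg hb0.le hb0.le) (mul_nonneg hs0.le (sq_nonneg r))]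
  have hc3 : 0 ≤ 2*s^2 - 2*b*s^2 - b*r^2/3 := by
    nlinarith [mul_nonneg hb0.le hsr, mul_nonneg (sq_nonneg s) (by linarith : (0:ℝ) ≤ 1/9 - b)]
  have hc4 : 0 ≤ (s^2+5)/2 - 1/2 - b*r^2/12 := by
    nlinarith [mul_nonneg hb0.le hsr, mul_nonneg (sq_nonneg s) (by linarith : (0:ℝ) ≤ 1/9 - b)]
  have hT1 : 0 ≤ (b*s^2/8)*(x1-12*s*x2)^2 := mul_nonneg (by positivity) (sq_nonneg _)
  have hT2 : 0 ≤ (b*s^2/8)*(x1+4*(x3+x4))^2 := mul_nonneg (by positivity) (sq_nonneg _)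
  have hT3 : 0 ≤ (1/2 : ℝ)*(2*s*x2+(4*x3-x4))^2 := mul_nonneg (by norm_num) (sq_nonneg _)
  have hT4 : 0 ≤ (b^2*s*r^2/6)*(x1+x2)^2 := mul_nonneg (by positivity) (sq_nonneg _)
  have hT5 : 0 ≤ (b*s^2*(3/4) - b*r^2/3 - b^2*s*r^2/6)*x1^2 := mul_nonneg hc1 (sq_nonneg _)
  have hT6 : 0 ≤ ((6-b)*s^2 - 18*b*s^4 - 2*s^2 - b*r^2/3 - b^2*s*r^2/6)*x2^2 :=
    mul_nonneg hc2 (sq_nonneg _)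
  have hT7 : 0 ≤ (2*s^2 - 2*b*s^2 - b*r^2/3)*(x3+x4)^2 := mul_nonneg hc3 (sq_nonneg _)
  have hT8 : 0 ≤ ((s^2+5)/2 - 1/2 - b*r^2/12)*(4*x3-x4)^2 := mul_nonneg hc4 (sq_nonneg _)
  have hid : (2*x1*(-s*x2) + 2*x2*(s*x1 - 3*s^2*x2 + s*x3 + s*x4)
      + 2*(x3+x4)*((-s*x2 - (s^2+4)*x3 + x4) + (4*x3 - (s^2+1)*x4))
      + (4*x3-x4)*(4*(-s*x2 - (s^2+4)*x3 + x4) - (4*x3 - (s^2+1)*x4))/2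
      - b*s*((-s*x2)*x2 + x1*(s*x1 - 3*s^2*x2 + s*x3 + s*x4)))
    + (b*r^2/3) * (x1^2+x2^2+5*x3^2+5/4*x4^2 - b*s*x1*x2)
    = -((b*s^2/8)*(x1-12*s*x2)^2 + (b*s^2/8)*(x1+4*(x3+x4))^2
        + (1/2 : ℝ)*(2*s*x2+(4*x3-x4))^2 + (b^2*s*r^2/6)*(x1+x2)^2
        + (b*s^2*(3/4) - b*r^2/3 - b^2*s*r^2/6)*x1^2
        + ((6-b)*s^2 - 18*b*s^4 - 2*s^2 - b*r^2/3 - b^2*s*r^2/6)*x2^2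
        + (2*s^2 - 2*b*s^2 - b*r^2/3)*(x3+x4)^2
        + ((s^2+5)/2 - 1/2 - b*r^2/12)*(4*x3-x4)^2) := by ring
  rw [hid]
  linarith

/-- The hypocoercivity energy functional. -/
private noncomputable def En (b s : ℝ) (p : Fin 4 → ℝ → ℝ) (τ : ℝ) : ℝ :=
  (p 0 τ * p 0 τ + p 1 τ * p 1 τ) + (5*(p 2 τ * p 2 τ) + 5/4*(p 3 τ * p 3 τ))
    - b*s*(p 0 τ * p 1 τ)

private lemma energy_decay (s b r : ℝ) (hr0 : 0 < r) (hrs : r ≤ s) (hb0 : 0 < b)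
    (hbs : b*s ≤ 1) (hbs2 : 9*b*s^2 ≤ 1) (hb9 : b ≤ 1/9)
    (p : Fin 4 → ℝ → ℝ)
    (hd0 : ∀ τ, HasDerivAt (p 0) (-s * p 1 τ) τ)
    (hd1 : ∀ τ, HasDerivAt (p 1) (s * p 0 τ - 3*s^2 * p 1 τ + s * p 2 τ + s * p 3 τ) τ)
    (hd2 : ∀ τ, HasDerivAt (p 2) (-s * p 1 τ - (s^2+4) * p 2 τ + p 3 τ) τ)
    (hd3 : ∀ τ, HasDerivAt (p 3) (4 * p 2 τ - (s^2+1) * p 3 τ) τ)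
    (t : ℝ) (ht : 0 ≤ t) :
    (p 0 t)^2 + (p 1 t)^2 + (p 2 t)^2 + (p 3 t)^2 ≤
      10 * Real.exp (-(b*r^2/3)*t) * ((p 0 0)^2 + (p 1 0)^2 + (p 2 0)^2 + (p 3 0)^2) := by
  have hs0 : 0 < s := lt_of_lt_of_le hr0 hrs
  -- derivative of the energy
  have hFd : ∀ τ, HasDerivAt (fun u => En b s p u)
      (2*(p 0 τ)*(-s*(p 1 τ)) + 2*(p 1 τ)*(s*(p 0 τ) - 3*s^2*(p 1 τ) + s*(p 2 τ) + s*(p 3 τ))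
        + 2*((p 2 τ)+(p 3 τ))*((-s*(p 1 τ) - (s^2+4)*(p 2 τ) + (p 3 τ))
            + (4*(p 2 τ) - (s^2+1)*(p 3 τ)))
        + (4*(p 2 τ)-(p 3 τ))*(4*(-s*(p 1 τ) - (s^2+4)*(p 2 τ) + (p 3 τ))
            - (4*(p 2 τ) - (s^2+1)*(p 3 τ)))/2
        - b*s*((-s*(p 1 τ))*(p 1 τ) + (p 0 τ)*(s*(p 0 τ) - 3*s^2*(p 1 τ) + s*(p 2 τ) + s*(p 3 τ)))) τ := by
    intro τ
    have H := ((((hd0 τ).mul (hd0 τ)).add ((hd1 τ).mul (hd1 τ))).add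
        ((((hd2 τ).mul (hd2 τ)).const_mul (5:ℝ)).add
          (((hd3 τ).mul (hd3 τ)).const_mul (5/4 : ℝ)))).sub
        (((hd0 τ).mul (hd1 τ)).const_mul (b*s))
    have : En b s p = fun u => (p 0 u * p 0 u + p 1 u * p 1 u)
        + (5*(p 2 u * p 2 u) + 5/4*(p 3 u * p 3 u)) - b*s*(p 0 u * p 1 u) := rfl
    rw [this]
    refine H.congr_deriv ?_
    ring
  -- derivative of the exponentially weighted energy
  have hHd : ∀ τ, HasDerivAt (fun u => En b s p u * Real.exp ((b*r^2/3)*u))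
      (((2*(p 0 τ)*(-s*(p 1 τ)) + 2*(p 1 τ)*(s*(p 0 τ) - 3*s^2*(p 1 τ) + s*(p 2 τ) + s*(p 3 τ))
        + 2*((p 2 τ)+(p 3 τ))*((-s*(p 1 τ) - (s^2+4)*(p 2 τ) + (p 3 τ))
            + (4*(p 2 τ) - (s^2+1)*(p 3 τ)))
        + (4*(p 2 τ)-(p 3 τ))*(4*(-s*(p 1 τ) - (s^2+4)*(p 2 τ) + (p 3 τ))
            - (4*(p 2 τ) - (s^2+1)*(p 3 τ)))/2
        - b*s*((-s*(p 1 τ))*(p 1 τ) + (p 0 τ)*(s*(p 0 τ) - 3*s^2*(p 1 τ) + s*(p 2 τ) + s*(p 3 τ))))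
        + (b*r^2/3) * En b s p τ) * Real.exp ((b*r^2/3)*τ)) τ := by
    intro τ
    have He : HasDerivAt (fun u : ℝ => Real.exp ((b*r^2/3)*u))
        (Real.exp ((b*r^2/3)*τ) * ((b*r^2/3) * 1)) τ :=
      ((hasDerivAt_id τ).const_mul (b*r^2/3)).exp
    have H := (hFd τ).mul He
    refine H.congr_deriv ?_
    ring
  -- the weighted energy is antitone
  have hmono : Antitone (fun u => En b s p u * Real.exp ((b*r^2/3)*u)) := by
    apply antitone_of_deriv_nonpos
    · exact fun τ => (hHd τ).differentiableAt
    · intro τ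
      rw [(hHd τ).deriv]
      have hEn : En b s p τ = (p 0 τ)^2+(p 1 τ)^2+5*(p 2 τ)^2+5/4*(p 3 τ)^2
          - b*s*(p 0 τ)*(p 1 τ) := by
        show (p 0 τ * p 0 τ + p 1 τ * p 1 τ) + (5*(p 2 τ * p 2 τ) + 5/4*(p 3 τ * p 3 τ))
          - b*s*(p 0 τ * p 1 τ) = _
        ring
      have hcore := core_ineq s b r (p 0 τ) (p 1 τ) (p 2 τ) (p 3 τ) hr0 hrs hb0 hbs hbs2 hb9
      rw [hEn] at *
      have hE := (Real.exp_pos ((b*r^2/3)*τ)).le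
      exact mul_nonpos_iff.2 (Or.inr ⟨hcore, hE⟩)
  have hkey := hmono ht
  simp only [mul_zero, Real.exp_zero, mul_one] at hkey
  -- pointwise comparison of the energy with the euclidean norm
  have hlow : (p 0 t)^2 + (p 1 t)^2 + (p 2 t)^2 + (p 3 t)^2 ≤ 2 * En b s p t := by
    have h1 : 0 ≤ (1 - b*s) * ((p 0 t - p 1 t)^2 + (p 0 t + p 1 t)^2) :=
      mul_nonneg (by linarith) (by positivity)
    have h2 : 0 ≤ b*s*(p 0 t - p 1 t)^2 := mul_nonneg (by positivity) (sq_nonneg _)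
    show _ ≤ 2 * ((p 0 t * p 0 t + p 1 t * p 1 t) + (5*(p 2 t * p 2 t) + 5/4*(p 3 t * p 3 t))
      - b*s*(p 0 t * p 1 t))
    nlinarith [sq_nonneg (p 2 t), sq_nonneg (p 3 t)]
  have hup : En b s p 0 ≤ 5 * ((p 0 0)^2 + (p 1 0)^2 + (p 2 0)^2 + (p 3 0)^2) := by
    have h2 : 0 ≤ b*s*(p 0 0 + p 1 0)^2 := mul_nonneg (by positivity) (sq_nonneg _)
    have h1 : 0 ≤ (1 - b*s) * ((p 0 0)^2 + (p 1 0)^2) := mul_nonneg (by linarith) (by positivity)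
    show (p 0 0 * p 0 0 + p 1 0 * p 1 0) + (5*(p 2 0 * p 2 0) + 5/4*(p 3 0 * p 3 0))
      - b*s*(p 0 0 * p 1 0) ≤ _
    nlinarith [sq_nonneg (p 2 0), sq_nonneg (p 3 0)]
  -- put it together
  have hexp := Real.exp_pos ((b*r^2/3)*t)
  have hEt : En b s p t ≤ En b s p 0 * Real.exp (-(b*r^2/3)*t) := by
    have h := mul_le_mul_of_nonneg_right hkey (Real.exp_nonneg (-(b*r^2/3)*t))
    calc En b s p t
        = En b s p t * Real.exp ((b*r^2/3)*t) * Real.exp (-(b*r^2/3)*t) := by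
          rw [mul_assoc, ← Real.exp_add]; ring_nf; rw [Real.exp_zero, mul_one]
      _ ≤ En b s p 0 * Real.exp (-(b*r^2/3)*t) := h
  have hexp2 := Real.exp_nonneg (-(b*r^2/3)*t)
  calc (p 0 t)^2 + (p 1 t)^2 + (p 2 t)^2 + (p 3 t)^2 ≤ 2 * En b s p t := hlow
    _ ≤ 2 * (En b s p 0 * Real.exp (-(b*r^2/3)*t)) := by linarith
    _ ≤ 2 * ((5 * ((p 0 0)^2 + (p 1 0)^2 + (p 2 0)^2 + (p 3 0)^2)) * Real.exp (-(b*r^2/3)*t)) := by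
        have := mul_le_mul_of_nonneg_right hup hexp2
        linarith
    _ = 10 * Real.exp (-(b*r^2/3)*t) * ((p 0 0)^2 + (p 1 0)^2 + (p 2 0)^2 + (p 3 0)^2) := by ring

/-- For `0 < r < R` there are `C, κ > 0` such that for every `s ∈ [r, R]` and `t ≥ 0`,
`‖exp(−t J(s))‖ ≤ C e^{−κ t}` in the (L²) operator norm on 4×4 real matrices. -/
theorem medium_frequency_matrix_exp_decay (r R : ℝ) (hr : 0 < r) (hrR : r < R) :
    ∃ C κ : ℝ, 0 < C ∧ 0 < κ ∧ ∀ s ∈ Set.Icc r R, ∀ t : ℝ, 0 ≤ t →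
      ‖NormedSpace.exp (-(t • J s))‖ ≤ C * Real.exp (-κ * t) := by
  have hR0 : 0 < R := hr.trans hrR
  set b : ℝ := (9*(1+R)^2)⁻¹ with hbdef
  have hb0 : 0 < b := by positivity
  have hbR : b * (9*(1+R)^2) = 1 := inv_mul_cancel₀ (by positivity)
  refine ⟨4, b*r^2/6, by norm_num, by positivity, ?_⟩
  rintro s ⟨hrs, hsR⟩ t ht
  have hs0 : 0 < s := hr.trans_le hrs
  have hb9 : b ≤ 1/9 := by
    have h9 : (9:ℝ) ≤ 9*(1+R)^2 := by nlinarith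
    calc b ≤ (9:ℝ)⁻¹ := by
          rw [hbdef]
          exact inv_anti₀ (by norm_num) h9
      _ = 1/9 := by norm_num
  have hsle : s ≤ 9*(1+R)^2 := by nlinarith
  have hbs : b*s ≤ 1 := by nlinarith [mul_nonneg hb0.le (sub_nonneg.2 hsle)]
  have hs2le : s^2 ≤ (1+R)^2 := by nlinarith
  have hbs2 : 9*b*s^2 ≤ 1 := by nlinarith [mul_nonneg hb0.le (sub_nonneg.2 hs2le)]
  -- rewrite the matrix exponential
  have hAeq : -(t • J s) = t • (-(J s)) := (smul_neg t (J s)).symm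
  rw [hAeq, Matrix.l2_opNorm_def]
  refine ContinuousLinearMap.opNorm_le_bound _ (by positivity) fun x0 => ?_
  set M := NormedSpace.exp (t • (-(J s))) with hM
  set y : Fin 4 → ℝ := WithLp.equiv 2 (Fin 4 → ℝ) x0 with hy
  have happ : ((Matrix.toEuclideanLin.trans LinearMap.toContinuousLinearMap) M) x0
      = (WithLp.equiv 2 (Fin 4 → ℝ)).symm (M *ᵥ y) := rfl
  rw [happ]
  -- the solution components
  set p : Fin 4 → ℝ → ℝ := fun i τ => ((NormedSpace.exp (τ • (-(J s)))) *ᵥ y) i with hp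
  have hder : ∀ i τ, HasDerivAt (p i)
      (((-(J s)) *ᵥ ((NormedSpace.exp (τ • (-(J s)))) *ᵥ y)) i) τ :=
    fun i τ => comp_deriv s y i τ
  have hd0 : ∀ τ, HasDerivAt (p 0) (-s * p 1 τ) τ := by
    intro τ; have := hder 0 τ
    rwa [(mulVec_negJ s _).1] at this
  have hd1 : ∀ τ, HasDerivAt (p 1) (s * p 0 τ - 3*s^2 * p 1 τ + s * p 2 τ + s * p 3 τ) τ := by
    intro τ; have := hder 1 τ
    rwa [(mulVec_negJ s _).2.1] at this
  have hd2 : ∀ τ, HasDerivAt (p 2) (-s * p 1 τ - (s^2+4) * p 2 τ + p 3 τ) τ := by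
    intro τ; have := hder 2 τ
    rwa [(mulVec_negJ s _).2.2.1] at this
  have hd3 : ∀ τ, HasDerivAt (p 3) (4 * p 2 τ - (s^2+1) * p 3 τ) τ := by
    intro τ; have := hder 3 τ
    rwa [(mulVec_negJ s _).2.2.2] at this
  have hdecay := energy_decay s b r hr hrs hb0 hbs hbs2 hb9 p hd0 hd1 hd2 hd3 t ht
  -- initial values
  have hp0 : ∀ i, p i 0 = y i := by
    intro i
    simp only [hp, zero_smul, NormedSpace.exp_zero, Matrix.one_mulVec]
  rw [hp0 0, hp0 1, hp0 2, hp0 3] at hdecay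
  -- norms
  have hnx0 : ‖x0‖^2 = y 0^2 + y 1^2 + y 2^2 + y 3^2 := by
    rw [EuclideanSpace.norm_eq, Real.sq_sqrt (by positivity)]
    simp only [Fin.sum_univ_four, Real.norm_eq_abs, sq_abs]
    rfl
  have hnw : ‖(WithLp.equiv 2 (Fin 4 → ℝ)).symm (M *ᵥ y)‖
      = Real.sqrt ((p 0 t)^2 + (p 1 t)^2 + (p 2 t)^2 + (p 3 t)^2) := by
    rw [EuclideanSpace.norm_eq]
    congr 1
    simp [Fin.sum_univ_four, Real.norm_eq_abs, sq_abs, hp, hM]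
  rw [hnw]
  have hrhs : (0:ℝ) ≤ 4 * Real.exp (-(b*r^2/6)*t) * ‖x0‖ := by positivity
  have hsq : (p 0 t)^2 + (p 1 t)^2 + (p 2 t)^2 + (p 3 t)^2
      ≤ (4 * Real.exp (-(b*r^2/6)*t) * ‖x0‖)^2 := by
    have hE : (4 * Real.exp (-(b*r^2/6)*t) * ‖x0‖)^2
        = 16 * Real.exp (-(b*r^2/3)*t) * ‖x0‖^2 := by
      rw [mul_pow, mul_pow]
      have h2 : Real.exp (-(b*r^2/6)*t)^2 = Real.exp (-(b*r^2/3)*t) := by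
        rw [sq, ← Real.exp_add]; congr 1; ring
      rw [h2]; norm_num
    rw [hE, hnx0]
    have h10 : (10:ℝ) * Real.exp (-(b*r^2/3)*t) * (y 0^2 + y 1^2 + y 2^2 + y 3^2)
        ≤ 16 * Real.exp (-(b*r^2/3)*t) * (y 0^2 + y 1^2 + y 2^2 + y 3^2) := by
      have := Real.exp_nonneg (-(b*r^2/3)*t)
      nlinarith [sq_nonneg (y 0), sq_nonneg (y 1), sq_nonneg (y 2), sq_nonneg (y 3)]
    linarith
  calc Real.sqrt ((p 0 t)^2 + (p 1 t)^2 + (p 2 t)^2 + (p 3 t)^2)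
      ≤ Real.sqrt ((4 * Real.exp (-(b*r^2/6)*t) * ‖x0‖)^2) := Real.sqrt_le_sqrt hsq
    _ = 4 * Real.exp (-(b*r^2/6)*t) * ‖x0‖ := Real.sqrt_sq hrhs
end

section
/- There exist constants C > 0 and c > 0 such that for every s with 0 < s < 1/4, every t ≥ 0, and every vector v ∈ ℝ⁴, one has ‖exp(−t · J(s)) v‖² ≤ C e^{−c s² t} ‖v‖², where ‖·‖ is the Euclidean norm on ℝ⁴. -/
open scoped Matrix
section Aux

open NormedSpace

attribute [local instance] Matrix.linftyOpNormedAddCommGroup Matrix.linftyOpNormedRing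
  Matrix.linftyOpNormedAlgebra

/-- The continuous linear functional `M ↦ (M *ᵥ w) i`. -/
noncomputable def lfedPhi (w : Fin 4 → ℝ) (i : Fin 4) : Matrix (Fin 4) (Fin 4) ℝ →ₗ[ℝ] ℝ where
  toFun M := (M *ᵥ w) i
  map_add' A B := by simp [Matrix.add_mulVec]
  map_smul' c A := by simp [Matrix.smul_mulVec]

lemma lfed_hasDerivAt_V (B : Matrix (Fin 4) (Fin 4) ℝ) (w : Fin 4 → ℝ) (i : Fin 4) (r : ℝ) :
    HasDerivAt (fun r : ℝ => (exp (r • B) *ᵥ w) i) ((B *ᵥ (exp (r • B) *ᵥ w)) i) r := by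
  have h := hasDerivAt_exp_smul_const' B r
  have hL := (LinearMap.toContinuousLinearMap (lfedPhi w i)).hasFDerivAt (x := exp (r • B))
  have h2 := hL.comp_hasDerivAt r h
  exact h2.congr_deriv (by rw [Matrix.mulVec_mulVec]; rfl)

lemma lfed_key (s y1 y2 y3 y4 : ℝ) (hs : 0 < s) (h4 : s < 1/4) :
    -(2*s^2*y1^2) + 6*s^3*y1*y2 - 2*s^2*y1*y3 - 4*s^2*y2^2 - 8*s*y2*y4
      - 2*s^2*y3^2 - (2*s^2+10)*y4^2
    ≤ -(1/16)*s^2*(y1^2 + y2^2 + y3^2 + y4^2 - 2*s*y1*y2) := by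
  nlinarith [sq_nonneg (y1+y3), sq_nonneg (y1-y3),
    mul_nonneg hs.le (sq_nonneg (s*(y1+y2))), mul_nonneg hs.le (sq_nonneg (s*(y1-y2))),
    mul_nonneg (mul_nonneg (mul_nonneg hs.le hs.le) (by linarith : (0:ℝ) ≤ 1/4 - s)) (sq_nonneg y1),
    mul_nonneg (mul_nonneg (mul_nonneg hs.le hs.le) (by linarith : (0:ℝ) ≤ 1/4 - s)) (sq_nonneg y2),
    sq_nonneg (s*y2+2*y4), sq_nonneg (s*y2-2*y4), sq_nonneg (s*y1), sq_nonneg (s*y2),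
    sq_nonneg (s*y3), sq_nonneg y4, mul_pos hs hs]

lemma lfed_qUp (s a b c d : ℝ) (hs : 0 < s) (h4 : s < 1/4) :
    a^2+b^2+(c+d)^2+(4*c-d)^2 - 2*s*(a*b) ≤ 36*(a^2+b^2+c^2+d^2) := by
  nlinarith [sq_nonneg (a+b), sq_nonneg (a-b), sq_nonneg (c+3*d), sq_nonneg d, sq_nonneg c]

lemma lfed_qLow (s a b c d : ℝ) (hs : 0 < s) (h4 : s < 1/4) :
    a^2+b^2+c^2+d^2 ≤ 2*(a^2+b^2+(c+d)^2+(4*c-d)^2 - 2*s*(a*b)) := by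
  nlinarith [sq_nonneg (a+b), sq_nonneg (a-b), sq_nonneg (2*c-d), sq_nonneg c, sq_nonneg d]

/-- The main energy estimate, in coordinates. -/
lemma lfed_energy (s : ℝ) (hs : 0 < s) (hs4 : s < 1/4) (t : ℝ) (ht : 0 ≤ t) (w : Fin 4 → ℝ) :
    (exp (t • (-(J s))) *ᵥ w) 0^2 + (exp (t • (-(J s))) *ᵥ w) 1^2 +
      (exp (t • (-(J s))) *ᵥ w) 2^2 + (exp (t • (-(J s))) *ᵥ w) 3^2 ≤
    72 * Real.exp (-(1/16 * s^2 * t)) * (w 0^2 + w 1^2 + w 2^2 + w 3^2) := by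
  set B : Matrix (Fin 4) (Fin 4) ℝ := -(J s) with hB
  set V : ℝ → Fin 4 → ℝ := fun r => exp (r • B) *ᵥ w with hV
  set k : ℝ := 1/16 * s^2 with hk
  have hk0 : 0 ≤ k := by positivity
  -- components of B *ᵥ x
  have hB0 : ∀ x : Fin 4 → ℝ, (B *ᵥ x) 0 = -(s * x 1) := by
    intro x; simp [hB, J, Matrix.mulVec, dotProduct, Fin.sum_univ_four]
  have hB1 : ∀ x : Fin 4 → ℝ, (B *ᵥ x) 1 = s * x 0 - 3*s^2 * x 1 + s * x 2 + s * x 3 := by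
    intro x; simp [hB, J, Matrix.mulVec, dotProduct, Fin.sum_univ_four]; ring
  have hB2 : ∀ x : Fin 4 → ℝ, (B *ᵥ x) 2 = -(s * x 1) - (s^2+4) * x 2 + x 3 := by
    intro x; simp [hB, J, Matrix.mulVec, dotProduct, Fin.sum_univ_four]; ring
  have hB3 : ∀ x : Fin 4 → ℝ, (B *ᵥ x) 3 = 4 * x 2 - (s^2+1) * x 3 := by
    intro x; simp [hB, J, Matrix.mulVec, dotProduct, Fin.sum_univ_four]; ring
  have hVd : ∀ (i : Fin 4) (r : ℝ), HasDerivAt (fun r => V r i) ((B *ᵥ V r) i) r :=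
    fun i r => lfed_hasDerivAt_V B w i r
  set E : ℝ → ℝ := fun r =>
    V r 0 ^ 2 + V r 1 ^ 2 + (V r 2 + V r 3) ^ 2 + (4 * V r 2 - V r 3) ^ 2
      - 2 * s * (V r 0 * V r 1) with hE
  set D : ℝ → ℝ := fun r =>
    2 * V r 0 * (B *ᵥ V r) 0 + 2 * V r 1 * (B *ᵥ V r) 1
      + 2 * (V r 2 + V r 3) * ((B *ᵥ V r) 2 + (B *ᵥ V r) 3)
      + 2 * (4 * V r 2 - V r 3) * (4 * (B *ᵥ V r) 2 - (B *ᵥ V r) 3)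
      - 2 * s * ((B *ᵥ V r) 0 * V r 1 + V r 0 * (B *ᵥ V r) 1) with hD
  have hEd : ∀ r, HasDerivAt E (D r) r := by
    intro r
    have h0 := hVd 0 r; have h1 := hVd 1 r; have h2 := hVd 2 r; have h3 := hVd 3 r
    have hcomb := ((((h0.pow 2).add (h1.pow 2)).add ((h2.add h3).pow 2)).add
        (((h2.const_mul 4).sub h3).pow 2)).sub ((h0.mul h1).const_mul (2*s))
    refine hcomb.congr_deriv ?_
    rw [hD]; simp only [Pi.add_apply, Pi.sub_apply]
    push_cast
    ring
  -- differential inequality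
  have hineq : ∀ r, D r + k * E r ≤ 0 := by
    intro r
    have hkey := lfed_key s (V r 0) (V r 1) (V r 2 + V r 3) (4 * V r 2 - V r 3) hs hs4
    have hDval : D r =
        -(2*s^2*(V r 0)^2) + 6*s^3*(V r 0)*(V r 1) - 2*s^2*(V r 0)*(V r 2 + V r 3)
          - 4*s^2*(V r 1)^2 - 8*s*(V r 1)*(4 * V r 2 - V r 3)
          - 2*s^2*(V r 2 + V r 3)^2 - (2*s^2+10)*(4 * V r 2 - V r 3)^2 := by
      rw [hD]
      simp only
      rw [hB0 (V r), hB1 (V r), hB2 (V r), hB3 (V r)]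
      ring
    rw [hDval, hE, hk]
    simp only
    nlinarith [hkey]
  -- Gronwall via monotonicity
  set F : ℝ → ℝ := fun r => E r * Real.exp (k * r) with hF
  have hFd : ∀ r, HasDerivAt F ((D r + k * E r) * Real.exp (k * r)) r := by
    intro r
    have hexp : HasDerivAt (fun r : ℝ => Real.exp (k * r)) (Real.exp (k * r) * k) r := by
      have := (Real.hasDerivAt_exp (k * r)).comp r ((hasDerivAt_id r).const_mul k)
      simpa [Function.comp_def] using this
    have := (hEd r).mul hexp
    refine this.congr_deriv ?_
    ring
  have hanti : AntitoneOn F (Set.Ici (0:ℝ)) := by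
    apply antitoneOn_of_deriv_nonpos (convex_Ici 0)
    · exact fun x _ => (hFd x).continuousAt.continuousWithinAt
    · exact fun x _ => (hFd x).differentiableAt.differentiableWithinAt
    · intro x _
      rw [(hFd x).deriv]
      have h1 := hineq x
      nlinarith [Real.exp_pos (k * x)]
  have hFle : F t ≤ F 0 := hanti Set.self_mem_Ici ht ht
  have hV0 : V 0 = w := by
    rw [hV]; simp only [zero_smul, exp_zero, Matrix.one_mulVec]
  have hE0 : E 0 ≤ 36 * (w 0^2 + w 1^2 + w 2^2 + w 3^2) := by
    rw [hE]; simp only [hV0]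
    exact lfed_qUp s (w 0) (w 1) (w 2) (w 3) hs hs4
  have hEt : E t ≤ E 0 * Real.exp (-(k * t)) := by
    have hF0 : F 0 = E 0 := by rw [hF]; simp
    have : E t * Real.exp (k * t) ≤ E 0 := by rw [← hF0]; exact hFle
    have h2 := mul_le_mul_of_nonneg_right this (Real.exp_nonneg (-(k * t)))
    rwa [mul_assoc, ← Real.exp_add, add_neg_cancel, Real.exp_zero, mul_one] at h2
  have hlow := lfed_qLow s (V t 0) (V t 1) (V t 2) (V t 3) hs hs4
  have hEtpos : E 0 * Real.exp (-(k * t)) ≤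
      36 * (w 0^2 + w 1^2 + w 2^2 + w 3^2) * Real.exp (-(k * t)) :=
    mul_le_mul_of_nonneg_right hE0 (Real.exp_nonneg _)
  have hfinal : V t 0^2 + V t 1^2 + V t 2^2 + V t 3^2 ≤
      72 * Real.exp (-(k * t)) * (w 0^2 + w 1^2 + w 2^2 + w 3^2) := by
    have hEt' : E t ≤ 36 * (w 0^2 + w 1^2 + w 2^2 + w 3^2) * Real.exp (-(k * t)) :=
      le_trans hEt hEtpos
    have : V t 0^2 + V t 1^2 + V t 2^2 + V t 3^2 ≤ 2 * E t := by
      rw [hE]; simp only; linarith [hlow]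
    nlinarith [this, hEt']
  have hVt : ∀ i : Fin 4, (exp (t • B) *ᵥ w) i = V t i := fun i => rfl
  calc (exp (t • B) *ᵥ w) 0^2 + (exp (t • B) *ᵥ w) 1^2 +
        (exp (t • B) *ᵥ w) 2^2 + (exp (t • B) *ᵥ w) 3^2
      = V t 0^2 + V t 1^2 + V t 2^2 + V t 3^2 := by rw [hVt 0, hVt 1, hVt 2, hVt 3]
    _ ≤ 72 * Real.exp (-(k * t)) * (w 0^2 + w 1^2 + w 2^2 + w 3^2) := hfinal
    _ = 72 * Real.exp (-(1/16 * s^2 * t)) * (w 0^2 + w 1^2 + w 2^2 + w 3^2) := by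
        rw [hk]

end Aux

/-- There exist `C, c > 0` such that for every `0 < s < 1/4`, `t ≥ 0`, and every vector
`v ∈ ℝ⁴` (with the Euclidean norm), `‖exp(−t J(s)) v‖² ≤ C e^{−c s² t} ‖v‖²`. -/
theorem low_frequency_exp_decay :
    ∃ C c : ℝ, 0 < C ∧ 0 < c ∧ ∀ s : ℝ, 0 < s → s < 1 / 4 → ∀ t : ℝ, 0 ≤ t →
      ∀ v : EuclideanSpace ℝ (Fin 4),
        ‖(EuclideanSpace.equiv (Fin 4) ℝ).symm
            (NormedSpace.exp (-(t • J s)) *ᵥ EuclideanSpace.equiv (Fin 4) ℝ v)‖ ^ 2 ≤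
          C * Real.exp (-(c * s ^ 2 * t)) * ‖v‖ ^ 2 := by
  refine ⟨72, 1/16, by norm_num, by norm_num, ?_⟩
  intro s hs hs4 t ht v
  set w : Fin 4 → ℝ := EuclideanSpace.equiv (Fin 4) ℝ v with hw
  have hsm : -(t • J s) = t • (-(J s)) := by rw [smul_neg]
  have hnormsq : ∀ u : Fin 4 → ℝ,
      ‖(EuclideanSpace.equiv (Fin 4) ℝ).symm u‖ ^ 2 = u 0^2 + u 1^2 + u 2^2 + u 3^2 := by
    intro u
    rw [EuclideanSpace.norm_eq, Real.sq_sqrt (by positivity)]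
    simp [Fin.sum_univ_four, Real.norm_eq_abs, sq_abs]
  have hvnormsq : ‖v‖ ^ 2 = w 0^2 + w 1^2 + w 2^2 + w 3^2 := by
    rw [EuclideanSpace.norm_eq, Real.sq_sqrt (by positivity)]
    simp [Fin.sum_univ_four, Real.norm_eq_abs, sq_abs, hw]
  rw [hsm, hnormsq, hvnormsq]
  have := lfed_energy s hs (by linarith) t ht w
  convert this using 2
end

section
/- Let 1 ≤ p ≤ 2 and let q be the conjugate exponent (1/p + 1/q = 1), let c > 0, r₀ > 0, and let k ≥ 0 be an integer. Then there exists a constant C > 0 such that for every t ≥ 0 and every measurable function w : ℝ³ → ℂ with ‖w‖_{L^q(ℝ³)} < ∞, one has (∫_{{|ξ| ≤ r₀}} |ξ|^{2k} e^{−c|ξ|² t} |w(ξ)|² dξ)^{1/2} ≤ C (1 + t)^{−(3/2)(1/p − 1/2) − k/2} ‖w‖_{L^q(ℝ³)}. -/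
open MeasureTheory
open scoped NNReal ENNReal

local notation "E3" => EuclideanSpace ℝ (Fin 3)

lemma aux_exp_bound (m v : ℝ) (hm : 0 ≤ m) (hv : 0 ≤ v) :
    v ^ m * Real.exp (-v ^ 2) ≤ Real.exp (m ^ 2 / 4) := by
  have h1 : v ^ m ≤ Real.exp (m * v) := by
    rcases eq_or_lt_of_le hv with h | h
    · rcases eq_or_lt_of_le hm with h' | h'
      · simp [← h, ← h', Real.rpow_zero]
      · rw [← h, Real.zero_rpow h'.ne']
        positivity
    · rw [Real.rpow_def_of_pos h]
      apply Real.exp_le_exp.mpr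
      nlinarith [Real.log_le_sub_one_of_pos h]
  calc v ^ m * Real.exp (-v ^ 2) ≤ Real.exp (m * v) * Real.exp (-v ^ 2) := by
        exact mul_le_mul_of_nonneg_right h1 (Real.exp_pos _).le
    _ = Real.exp (m * v - v ^ 2) := by rw [← Real.exp_add]; ring_nf
    _ ≤ Real.exp (m ^ 2 / 4) := Real.exp_le_exp.mpr (by nlinarith [sq_nonneg (v - m / 2)])

lemma aux_P (m b u : ℝ) (hm : 0 ≤ m) (hb : 0 < b) (hu : 0 ≤ u) :
    u ^ m * Real.exp (-(b * u ^ 2)) ≤ Real.exp (m ^ 2 / 4) * b ^ (-(m / 2)) := by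
  set v := Real.sqrt b * u with hv
  have hvnn : 0 ≤ v := by positivity
  have hbu : b * u ^ 2 = v ^ 2 := by rw [hv, mul_pow, Real.sq_sqrt hb.le]
  have hsb : Real.sqrt b ^ m = b ^ (m / 2) := by
    rw [Real.sqrt_eq_rpow, ← Real.rpow_mul hb.le, one_div]
    ring_nf
  have hum : u ^ m = v ^ m * b ^ (-(m / 2)) := by
    rw [hv, Real.mul_rpow (Real.sqrt_nonneg b) hu, hsb, Real.rpow_neg hb.le]
    rw [mul_comm (b ^ (m/2)), mul_assoc, mul_inv_cancel₀ (by positivity)]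
    ring
  calc u ^ m * Real.exp (-(b * u ^ 2)) = (v ^ m * Real.exp (-v ^ 2)) * b ^ (-(m / 2)) := by
        rw [hum, hbu]; ring
    _ ≤ Real.exp (m ^ 2 / 4) * b ^ (-(m / 2)) := by
        apply mul_le_mul_of_nonneg_right (aux_exp_bound m v hm hvnn) (by positivity)

lemma aux_gauss_int (b : ℝ) (hb : 0 < b) :
    Integrable (fun v : E3 => Real.exp (-(b * ‖v‖ ^ 2))) := by
  have h := (GaussianFourier.integrable_cexp_neg_mul_sq_norm_add (V := E3)
      (b := (b : ℂ)) (by simpa using hb) 0 0).norm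
  convert h using 2 with v
  rw [Complex.norm_exp]
  norm_num
  left
  norm_cast

lemma aux_moment_int (M b : ℝ) (hM : 0 ≤ M) (hb : 0 < b) :
    Integrable (fun v : E3 => ‖v‖ ^ M * Real.exp (-(b * ‖v‖ ^ 2))) := by
  have hg := (aux_gauss_int (b / 2) (by positivity)).const_mul
      (Real.exp (M ^ 2 / 4) * (b / 2) ^ (-(M / 2)))
  refine hg.mono' (Measurable.aestronglyMeasurable (by fun_prop)) ?_
  filter_upwards with v
  have h1 : ‖v‖ ^ M * Real.exp (-(b / 2 * ‖v‖ ^ 2)) ≤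
      Real.exp (M ^ 2 / 4) * (b / 2) ^ (-(M / 2)) :=
    aux_P M (b / 2) ‖v‖ hM (by positivity) (norm_nonneg v)
  have h2 : Real.exp (-(b * ‖v‖ ^ 2)) =
      Real.exp (-(b / 2 * ‖v‖ ^ 2)) * Real.exp (-(b / 2 * ‖v‖ ^ 2)) := by
    rw [← Real.exp_add]; ring_nf
  rw [Real.norm_eq_abs, abs_of_nonneg (by positivity)]
  calc ‖v‖ ^ M * Real.exp (-(b * ‖v‖ ^ 2))
      = (‖v‖ ^ M * Real.exp (-(b / 2 * ‖v‖ ^ 2))) * Real.exp (-(b / 2 * ‖v‖ ^ 2)) := by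
        rw [h2]; ring
    _ ≤ (Real.exp (M ^ 2 / 4) * (b / 2) ^ (-(M / 2))) * Real.exp (-(b / 2 * ‖v‖ ^ 2)) :=
        mul_le_mul_of_nonneg_right h1 (Real.exp_pos _).le

lemma aux_scaling (M b s : ℝ) (hM : 0 ≤ M) (hb : 0 < b) (hs : 0 < s) :
    ∫ ξ : E3, ‖ξ‖ ^ M * Real.exp (-(b * s * ‖ξ‖ ^ 2)) =
      s ^ (-(M + 3) / 2) * ∫ ξ : E3, ‖ξ‖ ^ M * Real.exp (-(b * ‖ξ‖ ^ 2)) := by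
  set R : ℝ := Real.sqrt s with hR
  have hRpos : 0 < R := Real.sqrt_pos.mpr hs
  have key := MeasureTheory.Measure.integral_comp_smul (μ := (volume : Measure E3))
      (f := fun ξ : E3 => ‖ξ‖ ^ M * Real.exp (-(b * ‖ξ‖ ^ 2))) R
  have hfr : ∀ ξ : E3, ‖(R • ξ : E3)‖ ^ M * Real.exp (-(b * ‖(R • ξ : E3)‖ ^ 2)) =
      R ^ M * (‖ξ‖ ^ M * Real.exp (-(b * s * ‖ξ‖ ^ 2))) := by
    intro ξ
    have hn : ‖(R • ξ : E3)‖ = R * ‖ξ‖ := by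
      rw [norm_smul, Real.norm_eq_abs, abs_of_pos hRpos]
    rw [hn, Real.mul_rpow hRpos.le (norm_nonneg _), mul_pow, Real.sq_sqrt hs.le]
    ring_nf
  rw [show (fun ξ : E3 => ‖(R • ξ : E3)‖ ^ M * Real.exp (-(b * ‖(R • ξ : E3)‖ ^ 2))) =
      (fun ξ : E3 => R ^ M * (‖ξ‖ ^ M * Real.exp (-(b * s * ‖ξ‖ ^ 2)))) from funext hfr] at key
  rw [integral_const_mul] at key
  have hfin : Module.finrank ℝ E3 = 3 := finrank_euclideanSpace_fin
  rw [hfin] at key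
  -- key : R ^ M * ∫ ... s ... = |(R ^ 3)⁻¹| • ∫ ...
  have hR3 : |((R : ℝ) ^ (3:ℕ))⁻¹| = s ^ (-(3/2) : ℝ) := by
    rw [abs_of_nonneg (by positivity), hR, Real.sqrt_eq_rpow,
      ← Real.rpow_natCast (s ^ ((1:ℝ)/2)) 3, ← Real.rpow_mul hs.le, ← Real.rpow_neg hs.le]
    norm_num
  have hRM : (R : ℝ) ^ M = s ^ (M / 2) := by
    rw [hR, Real.sqrt_eq_rpow, ← Real.rpow_mul hs.le]
    ring_nf
  rw [hR3, hRM, smul_eq_mul] at key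
  have hsM : (s ^ (M / 2))⁻¹ = s ^ (-(M/2)) := by
    rw [← Real.rpow_neg hs.le]
  calc ∫ ξ : E3, ‖ξ‖ ^ M * Real.exp (-(b * s * ‖ξ‖ ^ 2))
      = (s ^ (M/2))⁻¹ * (s ^ (M / 2) * ∫ ξ : E3, ‖ξ‖ ^ M * Real.exp (-(b * s * ‖ξ‖ ^ 2))) := by
        rw [← mul_assoc, inv_mul_cancel₀ (by positivity), one_mul]
    _ = (s ^ (M/2))⁻¹ * (s ^ (-(3/2):ℝ) * ∫ ξ : E3, ‖ξ‖ ^ M * Real.exp (-(b * ‖ξ‖ ^ 2))) := by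
        rw [key]
    _ = s ^ (-(M + 3) / 2) * ∫ ξ : E3, ‖ξ‖ ^ M * Real.exp (-(b * ‖ξ‖ ^ 2)) := by
        rw [hsM, ← mul_assoc, ← Real.rpow_add hs]
        ring_nf

lemma aux_key (M b r₀ : ℝ) (hM : 0 ≤ M) (hb : 0 < b) (hr₀ : 0 < r₀) :
    ∃ A : ℝ, 0 < A ∧ ∀ t : ℝ, 0 ≤ t →
      (∫⁻ ξ in {ξ : E3 | ‖ξ‖ ≤ r₀}, ENNReal.ofReal (‖ξ‖ ^ M * Real.exp (-(b * t * ‖ξ‖ ^ 2)))) ≤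
        ENNReal.ofReal (A * (1 + t) ^ (-(M + 3) / 2)) := by
  set J : ℝ := ∫ ξ : E3, ‖ξ‖ ^ M * Real.exp (-(b * ‖ξ‖ ^ 2)) with hJ
  have hJ0 : 0 ≤ J := integral_nonneg fun ξ => by positivity
  refine ⟨Real.exp (b * r₀ ^ 2) * (J + 1), by positivity, fun t ht => ?_⟩
  have hs : (0:ℝ) < 1 + t := by linarith
  -- pointwise bound on the ball
  have hptw : ∀ ξ : E3, ξ ∈ {ξ : E3 | ‖ξ‖ ≤ r₀} →
      ENNReal.ofReal (‖ξ‖ ^ M * Real.exp (-(b * t * ‖ξ‖ ^ 2))) ≤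
      ENNReal.ofReal (Real.exp (b * r₀ ^ 2) * (‖ξ‖ ^ M * Real.exp (-(b * (1 + t) * ‖ξ‖ ^ 2)))) := by
    intro ξ hξ
    apply ENNReal.ofReal_le_ofReal
    have hexp : Real.exp (-(b * t * ‖ξ‖ ^ 2)) ≤
        Real.exp (b * r₀ ^ 2) * Real.exp (-(b * (1 + t) * ‖ξ‖ ^ 2)) := by
      rw [← Real.exp_add]
      apply Real.exp_le_exp.mpr
      have h1 : ‖ξ‖ ^ 2 ≤ r₀ ^ 2 := by
        apply sq_le_sq' (by linarith [norm_nonneg ξ]) hξ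
      nlinarith
    calc ‖ξ‖ ^ M * Real.exp (-(b * t * ‖ξ‖ ^ 2))
        ≤ ‖ξ‖ ^ M * (Real.exp (b * r₀ ^ 2) * Real.exp (-(b * (1 + t) * ‖ξ‖ ^ 2))) :=
          mul_le_mul_of_nonneg_left hexp (by positivity)
      _ = Real.exp (b * r₀ ^ 2) * (‖ξ‖ ^ M * Real.exp (-(b * (1 + t) * ‖ξ‖ ^ 2))) := by ring
  have hSmeas : MeasurableSet {ξ : E3 | ‖ξ‖ ≤ r₀} :=
    measurableSet_le continuous_norm.measurable measurable_const
  have hint : Integrable (fun ξ : E3 => ‖ξ‖ ^ M * Real.exp (-(b * (1 + t) * ‖ξ‖ ^ 2))) := by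
    have := aux_moment_int M (b * (1 + t)) hM (by positivity)
    exact this
  calc (∫⁻ ξ in {ξ : E3 | ‖ξ‖ ≤ r₀}, ENNReal.ofReal (‖ξ‖ ^ M * Real.exp (-(b * t * ‖ξ‖ ^ 2))))
      ≤ ∫⁻ ξ in {ξ : E3 | ‖ξ‖ ≤ r₀}, ENNReal.ofReal
          (Real.exp (b * r₀ ^ 2) * (‖ξ‖ ^ M * Real.exp (-(b * (1 + t) * ‖ξ‖ ^ 2)))) :=
        setLIntegral_mono (by fun_prop) hptw
    _ ≤ ∫⁻ ξ : E3, ENNReal.ofReal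
          (Real.exp (b * r₀ ^ 2) * (‖ξ‖ ^ M * Real.exp (-(b * (1 + t) * ‖ξ‖ ^ 2)))) :=
        setLIntegral_le_lintegral _ _
    _ = ENNReal.ofReal (∫ ξ : E3,
          Real.exp (b * r₀ ^ 2) * (‖ξ‖ ^ M * Real.exp (-(b * (1 + t) * ‖ξ‖ ^ 2)))) := by
        rw [← ofReal_integral_eq_lintegral_ofReal (hint.const_mul _)
          (Filter.Eventually.of_forall fun ξ => by positivity)]
    _ ≤ ENNReal.ofReal (Real.exp (b * r₀ ^ 2) * (J + 1) * (1 + t) ^ (-(M + 3) / 2)) := by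
        apply ENNReal.ofReal_le_ofReal
        rw [integral_const_mul, aux_scaling M b (1 + t) hM hb hs]
        have : (0:ℝ) ≤ (1 + t) ^ (-(M + 3) / 2) := Real.rpow_nonneg hs.le _
        calc Real.exp (b * r₀ ^ 2) * ((1 + t) ^ (-(M + 3) / 2) * J)
            ≤ Real.exp (b * r₀ ^ 2) * ((1 + t) ^ (-(M + 3) / 2) * (J + 1)) := by
              apply mul_le_mul_of_nonneg_left _ (Real.exp_pos _).le
              apply mul_le_mul_of_nonneg_left (by linarith) this
          _ = Real.exp (b * r₀ ^ 2) * (J + 1) * (1 + t) ^ (-(M + 3) / 2) := by ring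

lemma aux_lhs (c r₀ t : ℝ) (k : ℕ) (w : E3 → ℂ) :
    (∫⁻ ξ in {ξ : E3 | ‖ξ‖ ≤ r₀},
        (‖ξ‖₊ : ℝ≥0∞) ^ (2 * k) * ENNReal.ofReal (Real.exp (-(c * ‖ξ‖ ^ 2 * t))) *
          (‖w ξ‖₊ : ℝ≥0∞) ^ 2) ^ (1 / 2 : ℝ) =
    eLpNorm (fun ξ => ({ξ : E3 | ‖ξ‖ ≤ r₀}.indicator
        (fun ξ => ‖ξ‖ ^ k * Real.exp (-(c * ‖ξ‖ ^ 2 * t) / 2)) ξ) • w ξ) 2 volume := by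
  have hS : MeasurableSet {ξ : E3 | ‖ξ‖ ≤ r₀} :=
    measurableSet_le continuous_norm.measurable measurable_const
  rw [eLpNorm_eq_lintegral_rpow_enorm_toReal (by norm_num) (by norm_num)]
  have h2 : (2 : ℝ≥0∞).toReal = (2 : ℝ) := by simp
  rw [h2]
  congr 1
  · rw [← lintegral_indicator hS]
    apply lintegral_congr
    intro ξ
    by_cases hξ : ξ ∈ {ξ : E3 | ‖ξ‖ ≤ r₀}
    · rw [Set.indicator_of_mem hξ, Set.indicator_of_mem hξ]
      set g : ℝ := ‖ξ‖ ^ k * Real.exp (-(c * ‖ξ‖ ^ 2 * t) / 2) with hg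
      have hgnn : 0 ≤ g := by positivity
      rw [ENNReal.rpow_two, enorm_smul, mul_pow,
        Real.enorm_eq_ofReal hgnn, ← ENNReal.ofReal_pow hgnn]
      have hgsq : g ^ 2 = ‖ξ‖ ^ (2 * k) * Real.exp (-(c * ‖ξ‖ ^ 2 * t)) := by
        rw [hg, mul_pow, pow_two (Real.exp _), ← Real.exp_add, pow_mul']
        rw [show -(c * ‖ξ‖ ^ 2 * t) / 2 + -(c * ‖ξ‖ ^ 2 * t) / 2 = -(c * ‖ξ‖ ^ 2 * t) by ring]
      rw [hgsq, ENNReal.ofReal_mul (by positivity),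
        ENNReal.ofReal_pow (norm_nonneg ξ), ← Real.enorm_eq_ofReal (norm_nonneg ξ), enorm_norm]
      rfl
    · rw [Set.indicator_of_notMem hξ, Set.indicator_of_notMem hξ, zero_smul]
      simp

lemma aux_phi_top (c r₀ : ℝ) (hc : 0 < c) (hr₀ : 0 < r₀) (k : ℕ) :
    ∃ C : ℝ, 0 < C ∧ ∀ t : ℝ, 0 ≤ t →
      eLpNorm ({ξ : E3 | ‖ξ‖ ≤ r₀}.indicator
          (fun ξ => ‖ξ‖ ^ k * Real.exp (-(c * ‖ξ‖ ^ 2 * t) / 2))) ⊤ volume ≤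
        ENNReal.ofReal ((Real.exp (c / 2 * r₀ ^ 2 + (k:ℝ) ^ 2 / 4) * (c / 2) ^ (-((k:ℝ) / 2))) *
          (1 + t) ^ (-((k : ℝ)) / 2)) := by
  set C : ℝ := Real.exp (c / 2 * r₀ ^ 2 + (k:ℝ) ^ 2 / 4) * (c / 2) ^ (-((k:ℝ) / 2)) with hCdef
  have hCpos : 0 < C := by positivity
  refine ⟨C, hCpos, fun t ht => ?_⟩
  have hs : (0:ℝ) < 1 + t := by linarith
  rw [eLpNorm_exponent_top]
  apply eLpNormEssSup_le_of_ae_bound (C := C * (1 + t) ^ (-((k : ℝ)) / 2))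
  filter_upwards with ξ
  by_cases hξ : ξ ∈ {ξ : E3 | ‖ξ‖ ≤ r₀}
  · rw [Set.indicator_of_mem hξ, Real.norm_eq_abs, abs_of_nonneg (by positivity)]
    have hb : (0:ℝ) < c / 2 * (1 + t) := by positivity
    have hsplit : Real.exp (-(c * ‖ξ‖ ^ 2 * t) / 2) =
        Real.exp (c / 2 * ‖ξ‖ ^ 2) * Real.exp (-(c / 2 * (1 + t) * ‖ξ‖ ^ 2)) := by
      rw [← Real.exp_add]; ring_nf
    have hball : Real.exp (c / 2 * ‖ξ‖ ^ 2) ≤ Real.exp (c / 2 * r₀ ^ 2) := by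
      apply Real.exp_le_exp.mpr
      have : ‖ξ‖ ^ 2 ≤ r₀ ^ 2 := sq_le_sq' (by linarith [norm_nonneg ξ]) hξ
      nlinarith
    have hP : ‖ξ‖ ^ (k:ℝ) * Real.exp (-(c / 2 * (1 + t) * ‖ξ‖ ^ 2)) ≤
        Real.exp ((k:ℝ) ^ 2 / 4) * (c / 2 * (1 + t)) ^ (-((k:ℝ) / 2)) :=
      aux_P (k:ℝ) (c / 2 * (1 + t)) ‖ξ‖ (Nat.cast_nonneg k) hb (norm_nonneg ξ)
    rw [Real.rpow_natCast] at hP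
    have hmulrpow : (c / 2 * (1 + t)) ^ (-((k:ℝ) / 2)) =
        (c / 2) ^ (-((k:ℝ) / 2)) * (1 + t) ^ (-((k:ℝ) / 2)) :=
      Real.mul_rpow (by positivity) hs.le
    calc ‖ξ‖ ^ k * Real.exp (-(c * ‖ξ‖ ^ 2 * t) / 2)
        = Real.exp (c / 2 * ‖ξ‖ ^ 2) * (‖ξ‖ ^ k * Real.exp (-(c / 2 * (1 + t) * ‖ξ‖ ^ 2))) := by
          rw [hsplit]; ring
      _ ≤ Real.exp (c / 2 * r₀ ^ 2) * (Real.exp ((k:ℝ) ^ 2 / 4) * (c / 2 * (1 + t)) ^ (-((k:ℝ) / 2))) := by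
          apply mul_le_mul hball hP (by positivity) (Real.exp_pos _).le
      _ = C * (1 + t) ^ (-((k : ℝ)) / 2) := by
          rw [hmulrpow, hCdef, Real.exp_add]
          ring_nf
  · rw [Set.indicator_of_notMem hξ, norm_zero]
    positivity

lemma aux_phi_fin (c r₀ ρ : ℝ) (hc : 0 < c) (hr₀ : 0 < r₀) (hρ : 0 < ρ) (k : ℕ) :
    ∃ C : ℝ, 0 < C ∧ ∀ t : ℝ, 0 ≤ t → ∀ r : ℝ≥0∞, r ≠ 0 → r ≠ ⊤ → r.toReal = ρ →
      eLpNorm ({ξ : E3 | ‖ξ‖ ≤ r₀}.indicator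
          (fun ξ => ‖ξ‖ ^ k * Real.exp (-(c * ‖ξ‖ ^ 2 * t) / 2))) r volume ≤
        ENNReal.ofReal (C * (1 + t) ^ (-((k:ℝ) * ρ + 3) / (2 * ρ))) := by
  obtain ⟨A, hA, hAb⟩ := aux_key ((k:ℝ) * ρ) (c * ρ / 2) r₀ (by positivity) (by positivity) hr₀
  refine ⟨A ^ (1/ρ), by positivity, fun t ht r hr0 hrT hrρ => ?_⟩
  have hs : (0:ℝ) < 1 + t := by linarith
  rw [eLpNorm_eq_lintegral_rpow_enorm_toReal hr0 hrT, hrρ]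
  have hptw : ∀ ξ : E3, (‖({ξ : E3 | ‖ξ‖ ≤ r₀}.indicator
        (fun ξ => ‖ξ‖ ^ k * Real.exp (-(c * ‖ξ‖ ^ 2 * t) / 2)) ξ)‖₊ : ℝ≥0∞) ^ ρ =
      {ξ : E3 | ‖ξ‖ ≤ r₀}.indicator
        (fun ξ => ENNReal.ofReal (‖ξ‖ ^ ((k:ℝ) * ρ) * Real.exp (-(c * ρ / 2 * t * ‖ξ‖ ^ 2)))) ξ := by
    intro ξ
    by_cases hξ : ξ ∈ {ξ : E3 | ‖ξ‖ ≤ r₀}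
    · rw [Set.indicator_of_mem hξ, Set.indicator_of_mem hξ,
        ← enorm_eq_nnnorm, Real.enorm_eq_ofReal (by positivity),
        ENNReal.ofReal_rpow_of_nonneg (by positivity) hρ.le,
        Real.mul_rpow (by positivity) (Real.exp_pos _).le,
        ← Real.rpow_natCast ‖ξ‖ k, ← Real.rpow_mul (norm_nonneg ξ),
        ← Real.exp_mul]
      rw [show -(c * ‖ξ‖ ^ 2 * t) / 2 * ρ = -(c * ρ / 2 * t * ‖ξ‖ ^ 2) by ring]
    · rw [Set.indicator_of_notMem hξ, Set.indicator_of_notMem hξ, nnnorm_zero,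
        ENNReal.coe_zero, ENNReal.zero_rpow_of_pos hρ]
  calc (∫⁻ ξ, (‖({ξ : E3 | ‖ξ‖ ≤ r₀}.indicator
          (fun ξ => ‖ξ‖ ^ k * Real.exp (-(c * ‖ξ‖ ^ 2 * t) / 2)) ξ)‖₊ : ℝ≥0∞) ^ ρ) ^ (1/ρ)
      = (∫⁻ ξ in {ξ : E3 | ‖ξ‖ ≤ r₀},
          ENNReal.ofReal (‖ξ‖ ^ ((k:ℝ) * ρ) * Real.exp (-(c * ρ / 2 * t * ‖ξ‖ ^ 2)))) ^ (1/ρ) := by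
        rw [← lintegral_indicator (measurableSet_le continuous_norm.measurable measurable_const)]
        congr 1
        exact lintegral_congr hptw
    _ ≤ (ENNReal.ofReal (A * (1 + t) ^ (-((k:ℝ) * ρ + 3) / 2))) ^ (1/ρ) :=
        ENNReal.rpow_le_rpow (hAb t ht) (by positivity)
    _ = ENNReal.ofReal ((A * (1 + t) ^ (-((k:ℝ) * ρ + 3) / 2)) ^ (1/ρ)) :=
        ENNReal.ofReal_rpow_of_nonneg (by positivity) (by positivity)
    _ = ENNReal.ofReal (A ^ (1/ρ) * (1 + t) ^ (-((k:ℝ) * ρ + 3) / (2 * ρ))) := by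
        congr 1
        rw [Real.mul_rpow hA.le (Real.rpow_nonneg hs.le _), ← Real.rpow_mul hs.le]
        congr 1
        field_simp

/-- For `1 ≤ p ≤ 2` with conjugate exponent `q`, `c > 0`, `r₀ > 0`, and `k ≥ 0`, there is
`C > 0` such that for every `t ≥ 0` and every measurable `w : ℝ³ → ℂ` with finite `L^q` norm,
`(∫_{|ξ|≤r₀} |ξ|^{2k} e^{−c|ξ|²t} |w(ξ)|² dξ)^{1/2}
  ≤ C (1+t)^{−(3/2)(1/p−1/2)−k/2} ‖w‖_{L^q}`. -/
theorem low_frequency_heat_decay (p q : ℝ≥0∞) (hp1 : 1 ≤ p) (hp2 : p ≤ 2)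
    (hpq : 1 / p + 1 / q = 1) (c r₀ : ℝ) (hc : 0 < c) (hr₀ : 0 < r₀) (k : ℕ) :
    ∃ C : ℝ, 0 < C ∧ ∀ t : ℝ, 0 ≤ t → ∀ w : EuclideanSpace ℝ (Fin 3) → ℂ,
      Measurable w → eLpNorm w q volume < ⊤ →
      (∫⁻ ξ in {ξ : EuclideanSpace ℝ (Fin 3) | ‖ξ‖ ≤ r₀},
          (‖ξ‖₊ : ℝ≥0∞) ^ (2 * k) * ENNReal.ofReal (Real.exp (-(c * ‖ξ‖ ^ 2 * t))) *
            (‖w ξ‖₊ : ℝ≥0∞) ^ 2) ^ (1 / 2 : ℝ) ≤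
        ENNReal.ofReal
            (C * (1 + t) ^ (-(3 / 2 : ℝ) * (1 / p.toReal - 1 / 2) - (k : ℝ) / 2)) *
          eLpNorm w q volume := by
  have hp0 : p ≠ 0 := (zero_lt_one.trans_le hp1).ne'
  have hpT : p ≠ ⊤ := ne_top_of_le_ne_top ENNReal.ofNat_ne_top hp2
  have ha_top : 1 / p ≠ ⊤ := by
    rw [one_div]; exact ENNReal.inv_ne_top.mpr hp0
  have ha1 : 1 / p ≤ 1 := by
    rw [one_div]; exact ENNReal.inv_le_one.mpr hp1
  have ha2 : 1 / 2 ≤ 1 / p := by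
    rw [one_div, one_div]; exact ENNReal.inv_le_inv.mpr hp2
  have hq : 1 / q = 1 - 1 / p := by
    have h := ENNReal.add_sub_cancel_left (a := 1 / p) (b := 1 / q) ha_top
    rw [hpq] at h
    exact h.symm
  have hS : MeasurableSet {ξ : E3 | ‖ξ‖ ≤ r₀} :=
    measurableSet_le continuous_norm.measurable measurable_const
  by_cases hp : p = 2
  · -- p = 2, use r = ∞
    obtain ⟨C, hC, hCb⟩ := aux_phi_top c r₀ hc hr₀ k
    refine ⟨Real.exp (c / 2 * r₀ ^ 2 + (k:ℝ) ^ 2 / 4) * (c / 2) ^ (-((k:ℝ) / 2)),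
      by positivity, fun t ht w hw hwq => ?_⟩
    have hqr : (1 : ℝ≥0∞) / 2 = 1 / ⊤ + 1 / q := by
      rw [hq, hp]
      simp [ENNReal.one_sub_inv_two]
    have hφm : AEStronglyMeasurable ({ξ : E3 | ‖ξ‖ ≤ r₀}.indicator
        (fun ξ => ‖ξ‖ ^ k * Real.exp (-(c * ‖ξ‖ ^ 2 * t) / 2))) volume :=
      (Measurable.indicator (by fun_prop) hS).aestronglyMeasurable
    have hexp : -(3 / 2 : ℝ) * (1 / p.toReal - 1 / 2) - (k : ℝ) / 2 = -((k:ℝ)) / 2 := by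
      rw [hp]; norm_num; ring
    rw [hexp]
    calc (∫⁻ ξ in {ξ : E3 | ‖ξ‖ ≤ r₀},
          (‖ξ‖₊ : ℝ≥0∞) ^ (2 * k) * ENNReal.ofReal (Real.exp (-(c * ‖ξ‖ ^ 2 * t))) *
            (‖w ξ‖₊ : ℝ≥0∞) ^ 2) ^ (1 / 2 : ℝ)
        = eLpNorm (fun ξ => ({ξ : E3 | ‖ξ‖ ≤ r₀}.indicator
            (fun ξ => ‖ξ‖ ^ k * Real.exp (-(c * ‖ξ‖ ^ 2 * t) / 2)) ξ) • w ξ) 2 volume :=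
          aux_lhs c r₀ t k w
      _ ≤ eLpNorm ({ξ : E3 | ‖ξ‖ ≤ r₀}.indicator
            (fun ξ => ‖ξ‖ ^ k * Real.exp (-(c * ‖ξ‖ ^ 2 * t) / 2))) ⊤ volume *
            eLpNorm w q volume :=
          by have := eLpNorm_smul_le_mul_eLpNorm (p := ⊤) (q := q) (r := 2) (hpqr := ⟨by simpa only [one_div] using hqr.symm⟩) hw.aestronglyMeasurable hφm; exact this
      _ ≤ ENNReal.ofReal ((Real.exp (c / 2 * r₀ ^ 2 + (k:ℝ) ^ 2 / 4) * (c / 2) ^ (-((k:ℝ) / 2))) *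
            (1 + t) ^ (-((k : ℝ)) / 2)) * eLpNorm w q volume :=
          mul_le_mul_left (hCb t ht) _
  · -- p < 2
    have hplt : p < 2 := lt_of_le_of_ne hp2 hp
    have h2a : 1 / 2 < 1 / p := by
      rw [one_div, one_div]
      exact ENNReal.inv_lt_inv.mpr hplt
    have hd0 : 1 / p - 1 / 2 ≠ 0 := (tsub_pos_of_lt h2a).ne'
    have hdT : 1 / p - 1 / 2 ≠ ⊤ := ne_top_of_le_ne_top ha_top (tsub_le_self)
    set r : ℝ≥0∞ := (1 / p - 1 / 2)⁻¹ with hrdef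
    have hr0 : r ≠ 0 := ENNReal.inv_ne_zero.mpr hdT
    have hrT : r ≠ ⊤ := ENNReal.inv_ne_top.mpr hd0
    set ρ : ℝ := r.toReal with hρdef
    have hρpos : 0 < ρ := ENNReal.toReal_pos hr0 hrT
    have h1ρ : 1 / p.toReal - 1 / 2 = 1 / ρ := by
      have hsub : (1 / p - 1 / 2).toReal = 1 / p.toReal - 1 / 2 := by
        rw [ENNReal.toReal_sub_of_le ha2 ha_top, one_div, ENNReal.toReal_inv, one_div]
        norm_num
      rw [hρdef, hrdef, ENNReal.toReal_inv, hsub]; simp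
    have hqr : (1 : ℝ≥0∞) / 2 = 1 / r + 1 / q := by
      have h1r : 1 / r = 1 / p - 1 / 2 := by
        rw [one_div, hrdef, inv_inv]
      have hfin2 : (1 : ℝ≥0∞) - 1 / p ≠ ⊤ := ne_top_of_le_ne_top ENNReal.one_ne_top tsub_le_self
      rw [hq, h1r, ← ENNReal.toReal_eq_toReal_iff' (by norm_num) (ENNReal.add_ne_top.mpr ⟨hdT, hfin2⟩),
        ENNReal.toReal_add hdT hfin2, ENNReal.toReal_sub_of_le ha2 ha_top,
        ENNReal.toReal_sub_of_le ha1 ENNReal.one_ne_top]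
      norm_num
    obtain ⟨C, hC, hCb⟩ := aux_phi_fin c r₀ ρ hc hr₀ hρpos k
    refine ⟨C, hC, fun t ht w hw hwq => ?_⟩
    have hφm : AEStronglyMeasurable ({ξ : E3 | ‖ξ‖ ≤ r₀}.indicator
        (fun ξ => ‖ξ‖ ^ k * Real.exp (-(c * ‖ξ‖ ^ 2 * t) / 2))) volume :=
      (Measurable.indicator (by fun_prop) hS).aestronglyMeasurable
    have hexp : -(3 / 2 : ℝ) * (1 / p.toReal - 1 / 2) - (k : ℝ) / 2 =
        -((k:ℝ) * ρ + 3) / (2 * ρ) := by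
      rw [h1ρ]
      field_simp
      ring
    rw [hexp]
    calc (∫⁻ ξ in {ξ : E3 | ‖ξ‖ ≤ r₀},
          (‖ξ‖₊ : ℝ≥0∞) ^ (2 * k) * ENNReal.ofReal (Real.exp (-(c * ‖ξ‖ ^ 2 * t))) *
            (‖w ξ‖₊ : ℝ≥0∞) ^ 2) ^ (1 / 2 : ℝ)
        = eLpNorm (fun ξ => ({ξ : E3 | ‖ξ‖ ≤ r₀}.indicator
            (fun ξ => ‖ξ‖ ^ k * Real.exp (-(c * ‖ξ‖ ^ 2 * t) / 2)) ξ) • w ξ) 2 volume :=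
          aux_lhs c r₀ t k w
      _ ≤ eLpNorm ({ξ : E3 | ‖ξ‖ ≤ r₀}.indicator
            (fun ξ => ‖ξ‖ ^ k * Real.exp (-(c * ‖ξ‖ ^ 2 * t) / 2))) r volume *
            eLpNorm w q volume :=
          by have := eLpNorm_smul_le_mul_eLpNorm (p := r) (q := q) (r := 2) (hpqr := ⟨by simpa only [one_div] using hqr.symm⟩) hw.aestronglyMeasurable hφm; exact this
      _ ≤ ENNReal.ofReal (C * (1 + t) ^ (-((k:ℝ) * ρ + 3) / (2 * ρ))) * eLpNorm w q volume :=
          mul_le_mul_left (hCb t ht r hr0 hrT rfl) _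
end
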